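/- Sign of the Prüfer angle difference near a zero of the Wronskian: let u₀, u₁ be nontrivial solutions of -(pu_j')' + q_j u_j = 0 with Prüfer angles θ₀, θ₁ and Δ(x) = θ₁(x) - θ₀(x). Suppose Δ(x₀) ≡ 0 mod π. If q₀ - q₁ > 0 almost everywhere on (x₀, x₀+ε), then Δ(x) > Δ(x₀) for x ∈ (x₀, x₀+ε); if q₀ - q₁ < 0 a.e. there, then Δ(x) < Δ(x₀); and if q₀ = q₁ a.e. there, then Δ(x) = Δ(x₀). -/

import Mathlib

set_option maxHeartbeats 1000000

open Set Real MeasureTheory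

lemma image_volume_zero_of_deriv_zero {f : ℝ → ℝ} {s : Set ℝ}
    (hs : MeasurableSet s) (hf : ∀ x ∈ s, HasDerivAt f 0 x) :
    volume (f '' s) = 0 := by
  have e0 : (ContinuousLinearMap.toSpanSingleton ℝ (0 : ℝ)) = 0 := by
    ext x; simp
  have h := addHaar_image_le_lintegral_abs_det_fderiv (μ := volume) hs
      (f' := fun _ => (0 : ℝ →L[ℝ] ℝ))
      (fun x hx => e0 ▸ (hf x hx).hasFDerivAt.hasFDerivWithinAt)
  simpa [ContinuousLinearMap.det, _root_.map_zero] using h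

lemma image_volume_zero_of_volume_zero {f f' : ℝ → ℝ} {s u : Set ℝ}
    (hs : volume s = 0) (hsu : s ⊆ u) (hu : MeasurableSet u)
    (hf : ∀ x ∈ u, HasDerivAt f (f' x) x) :
    volume (f '' s) = 0 := by
  set t := toMeasurable volume s ∩ u with htdef
  have hmt : MeasurableSet t := (measurableSet_toMeasurable _ _).inter hu
  have htn : volume t = 0 := le_antisymm
    (le_trans (measure_mono inter_subset_left)
      (by rw [measure_toMeasurable]; exact hs.le)) (zero_le)
  have h := addHaar_image_le_lintegral_abs_det_fderiv (μ := volume) hmt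
      (f' := fun x => ContinuousLinearMap.smulRight (1 : ℝ →L[ℝ] ℝ) (f' x))
      (fun x hx => (hf x hx.2).hasFDerivAt.hasFDerivWithinAt)
  rw [setLIntegral_measure_zero _ _ htn] at h
  exact le_antisymm (le_trans (measure_mono (image_mono (f := f)
    (subset_inter (subset_toMeasurable _ _) hsu))) h) (zero_le)

lemma monotoneOn_of_hasDerivAt_ae_nonneg {f w : ℝ → ℝ} {α β : ℝ}
    (hd : ∀ x ∈ Icc α β, HasDerivAt f (w x) x)
    (hw : ∀ᵐ x ∂(volume.restrict (Ioo α β)), 0 ≤ w x) :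
    MonotoneOn f (Icc α β) := by
  intro s hs t ht hst
  rcases eq_or_lt_of_le hst with rfl | hst
  · exact le_rfl
  by_contra hlt
  push_neg at hlt
  have hN0 : volume ({x | ¬ (0 ≤ w x)} ∩ Ioo α β) = 0 := by
    have := ae_iff.mp hw
    rwa [Measure.restrict_apply' measurableSet_Ioo] at this
  have hB1 : volume (f '' ({x | ¬ (0 ≤ w x)} ∩ Ioo α β)) = 0 :=
    image_volume_zero_of_volume_zero hN0 (fun z hz => Ioo_subset_Icc_self hz.2)
      measurableSet_Icc hd
  have hB2 : volume (f '' ({x | deriv f x = 0} ∩ Ioo α β)) = 0 := by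
    refine image_volume_zero_of_deriv_zero
      (((measurable_deriv f) (measurableSet_singleton 0)).inter measurableSet_Ioo) ?_
    rintro x ⟨hx0, hxI⟩
    have h := hd x (Ioo_subset_Icc_self hxI)
    have hw0 : w x = 0 := by rw [← h.deriv]; exact hx0
    rwa [hw0] at h
  set B : Set ℝ := f '' ({x | ¬ (0 ≤ w x)} ∩ Ioo α β) ∪ f '' ({x | deriv f x = 0} ∩ Ioo α β)
    with hBdef
  have hBnull : volume B = 0 := measure_union_null hB1 hB2
  obtain ⟨y, hy, hyB⟩ : ∃ y ∈ Ioo (f t) (f s), y ∉ B := by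
    by_contra hcon
    push_neg at hcon
    have h1 : volume (Ioo (f t) (f s)) ≤ volume B :=
      measure_mono (fun y hy => hcon y hy)
    rw [hBnull, nonpos_iff_eq_zero, Real.volume_Ioo, ENNReal.ofReal_eq_zero] at h1
    linarith
  have hcont : ContinuousOn f (Icc s t) := fun z hz =>
    ((hd z ⟨hs.1.trans hz.1, hz.2.trans ht.2⟩).continuousAt).continuousWithinAt
  set S : Set ℝ := Icc s t ∩ f ⁻¹' (Ici y) with hSdef
  have hSc : IsClosed S := hcont.preimage_isClosed_of_isClosed isClosed_Icc isClosed_Ici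
  have hSne : S.Nonempty := ⟨s, ⟨le_rfl, hst.le⟩, le_of_lt hy.2⟩
  have hSbdd : BddAbove S := BddAbove.mono inter_subset_left bddAbove_Icc
  set c := sSup S with hcdef
  have hcS : c ∈ S := hSc.csSup_mem hSne hSbdd
  have hct : c < t := by
    rcases hcS.1.2.eq_or_lt with h | h
    · exfalso
      have h2 : y ≤ f t := h ▸ hcS.2
      exact absurd h2 (not_le.mpr hy.1)
    · exact h
  have hfx : ∀ x ∈ Ioc c t, f x < y := by
    intro x hx
    by_contra hge
    push_neg at hge
    have hxS : x ∈ S := ⟨⟨hcS.1.1.trans hx.1.le, hx.2⟩, hge⟩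
    exact absurd (le_csSup hSbdd hxS) (not_le.mpr hx.1)
  have hcab : c ∈ Icc α β := ⟨hs.1.trans hcS.1.1, hcS.1.2.trans ht.2⟩
  have hfc : f c = y := by
    refine le_antisymm ?_ hcS.2
    have htd : Filter.Tendsto f (nhdsWithin c (Ioi c)) (nhds (f c)) :=
      ((hd c hcab).continuousAt).tendsto.mono_left nhdsWithin_le_nhds
    refine le_of_tendsto htd ?_
    filter_upwards [Ioc_mem_nhdsGT_of_mem ⟨le_rfl, hct⟩] with x hx
    exact (hfx x hx).le
  have hcs : s < c := by
    rcases hcS.1.1.eq_or_lt with h | h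
    · exfalso
      have : f s = y := by rw [h]; exact hfc
      linarith [hy.2]
    · exact h
  have hcI : c ∈ Ioo α β := ⟨hs.1.trans_lt hcs, hct.trans_le ht.2⟩
  have hc_w : 0 ≤ w c := by
    by_contra hcw
    exact hyB (Or.inl ⟨c, ⟨hcw, hcI⟩, hfc⟩)
  have hc_d : deriv f c ≠ 0 := fun h0 => hyB (Or.inr ⟨c, ⟨h0, hcI⟩, hfc⟩)
  have hdc := hd c hcab
  have hslope : Filter.Tendsto (slope f c) (nhdsWithin c (Ioi c)) (nhds (w c)) :=
    (hasDerivAt_iff_tendsto_slope.mp hdc).mono_left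
      (nhdsWithin_mono c fun x hx => mem_compl_singleton_iff.mpr (ne_of_gt hx))
  have hwc_le : w c ≤ 0 := by
    refine le_of_tendsto hslope ?_
    filter_upwards [Ioc_mem_nhdsGT_of_mem ⟨le_rfl, hct⟩] with x hx
    have hfxy := hfx x hx
    have h1 : f x - f c < 0 := by rw [hfc]; linarith
    have hxc : 0 < x - c := sub_pos.mpr hx.1
    show slope f c x ≤ 0
    rw [slope_def_field]
    exact le_of_lt (div_neg_of_neg_of_pos h1 hxc)
  exact hc_d (by rw [hdc.deriv, le_antisymm hwc_le hc_w])

lemma strictMonoOn_of_hasDerivAt_ae_pos {f w : ℝ → ℝ} {α β : ℝ}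
    (hd : ∀ x ∈ Icc α β, HasDerivAt f (w x) x)
    (hw : ∀ᵐ x ∂(volume.restrict (Ioo α β)), 0 < w x) :
    StrictMonoOn f (Icc α β) := by
  have hmono := monotoneOn_of_hasDerivAt_ae_nonneg hd (hw.mono fun x h => h.le)
  intro s hs t ht hst
  rcases (hmono hs ht hst.le).lt_or_eq with h | h
  · exact h
  exfalso
  have hconst : ∀ z ∈ Icc s t, f z = f s := by
    intro z hz
    have hzab : z ∈ Icc α β := ⟨hs.1.trans hz.1, hz.2.trans ht.2⟩
    have h1 := hmono hs hzab hz.1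
    have h2 := hmono hzab ht hz.2
    rw [← h] at h2
    exact le_antisymm h2 h1
  have hzero : ∀ z ∈ Ioo s t, w z = 0 := by
    intro z hz
    have hzI : z ∈ Icc α β := ⟨hs.1.trans hz.1.le, hz.2.le.trans ht.2⟩
    have heq : f =ᶠ[nhds z] (fun _ => f s) := by
      filter_upwards [Ioo_mem_nhds hz.1 hz.2] with x hx
      exact hconst x (Ioo_subset_Icc_self hx)
    have hd0 : HasDerivAt f 0 z :=
      (hasDerivAt_const z (f s)).congr_of_eventuallyEq heq
    exact (hd z hzI).unique hd0
  have h0 : volume ({x | ¬ 0 < w x} ∩ Ioo α β) = 0 := by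
    have := ae_iff.mp hw
    rwa [Measure.restrict_apply' measurableSet_Ioo] at this
  have hsub : Ioo s t ⊆ {x | ¬ 0 < w x} ∩ Ioo α β := fun z hz =>
    ⟨by simp [hzero z hz], ⟨hs.1.trans_lt hz.1, hz.2.trans_le ht.2⟩⟩
  have hmeas : volume (Ioo s t) ≤ volume ({x | ¬ 0 < w x} ∩ Ioo α β) := measure_mono hsub
  rw [h0, nonpos_iff_eq_zero, Real.volume_Ioo, ENNReal.ofReal_eq_zero] at hmeas
  linarith

lemma strictAntiOn_of_hasDerivAt_ae_neg {f w : ℝ → ℝ} {α β : ℝ}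
    (hd : ∀ x ∈ Icc α β, HasDerivAt f (w x) x)
    (hw : ∀ᵐ x ∂(volume.restrict (Ioo α β)), w x < 0) :
    StrictAntiOn f (Icc α β) := by
  have h := strictMonoOn_of_hasDerivAt_ae_pos (f := fun x => -f x) (w := fun x => -w x)
    (fun x hx => (hd x hx).neg) (hw.mono fun x h => by show (0:ℝ) < -w x; linarith)
  intro s hs t ht hst
  have := h hs ht hst
  simpa using this

lemma constant_of_hasDerivAt_ae_zero {f w : ℝ → ℝ} {α β : ℝ}
    (hd : ∀ x ∈ Icc α β, HasDerivAt f (w x) x)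
    (hw : ∀ᵐ x ∂(volume.restrict (Ioo α β)), w x = 0) :
    ∀ x ∈ Icc α β, ∀ y ∈ Icc α β, f x = f y := by
  have h1 := monotoneOn_of_hasDerivAt_ae_nonneg hd (hw.mono fun x h => h.ge)
  have h2 := monotoneOn_of_hasDerivAt_ae_nonneg (f := fun x => -f x) (w := fun x => -w x)
    (fun x hx => (hd x hx).neg) (hw.mono fun x h => by show (0:ℝ) ≤ -w x; simp [h])
  intro x hx y hy
  rcases le_total x y with hxy | hxy
  · have := h1 hx hy hxy
    have := h2 hx hy hxy
    simp only [neg_le_neg_iff] at this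
    linarith
  · have := h1 hy hx hxy
    have := h2 hy hx hxy
    simp only [neg_le_neg_iff] at this
    linarith

lemma sigma_mul_self (k : ℤ) : ((-1:ℝ)^k) * ((-1:ℝ)^k) = 1 := by
  rcases Int.even_or_odd k with hk | hk
  · rw [hk.neg_one_zpow]; norm_num
  · rw [hk.neg_one_zpow]; norm_num

lemma angle_right {g : ℝ → ℝ} {c e : ℝ} {k : ℤ} (hce : c < e)
    (hg : ContinuousOn g (Icc c e)) (hgc : g c = k * π)
    (hsin : ∀ z ∈ Ioc c e, 0 < (-1:ℝ)^k * sin (g z)) :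
    ∀ z ∈ Ioc c e, (k:ℝ) * π < g z := by
  intro z hz
  by_contra hle
  push_neg at hle
  have hsz := hsin z hz
  have hne : g z ≠ k * π := by
    intro h
    rw [h, Real.sin_int_mul_pi, mul_zero] at hsz
    exact lt_irrefl 0 hsz
  have hlt : g z < k * π := lt_of_le_of_ne hle hne
  rcases le_or_gt (g z) ((k:ℝ) * π - π) with hle2 | hgt
  · have him : (k:ℝ) * π - π ∈ g '' (Icc c z) := by
      apply intermediate_value_Icc' hz.1.le (hg.mono (Icc_subset_Icc le_rfl hz.2))
      constructor
      · exact hle2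
      · rw [hgc]; linarith [Real.pi_pos]
    obtain ⟨z', hz', hgz'⟩ := him
    have hz'c : z' ≠ c := by
      intro h
      rw [h, hgc] at hgz'
      linarith [Real.pi_pos]
    have hz'mem : z' ∈ Ioc c e :=
      ⟨lt_of_le_of_ne hz'.1 (Ne.symm hz'c), hz'.2.trans hz.2⟩
    have := hsin z' hz'mem
    have hrw : g z' = ((k - 1 : ℤ) : ℝ) * π := by rw [hgz']; push_cast; ring
    rw [hrw, Real.sin_int_mul_pi, mul_zero] at this
    exact lt_irrefl 0 this
  · have hrw : g z = (g z - k * π) + (k:ℤ) * π := by push_cast; ring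
    have hsint : sin (g z - k * π) < 0 :=
      Real.sin_neg_of_neg_of_neg_pi_lt (by linarith) (by linarith)
    rw [hrw, Real.sin_add_int_mul_pi, ← mul_assoc, sigma_mul_self, one_mul] at hsz
    linarith

lemma angle_left {g : ℝ → ℝ} {e c : ℝ} {k : ℤ} (hec : e < c)
    (hg : ContinuousOn g (Icc e c)) (hgc : g c = k * π)
    (hsin : ∀ z ∈ Ico e c, (-1:ℝ)^k * sin (g z) < 0) :
    ∀ z ∈ Ico e c, g z < (k:ℝ) * π := by
  intro z hz
  by_contra hle
  push_neg at hle
  have hsz := hsin z hz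
  have hne : g z ≠ k * π := by
    intro h
    rw [h, Real.sin_int_mul_pi, mul_zero] at hsz
    exact lt_irrefl 0 hsz
  have hlt : (k:ℝ) * π < g z := lt_of_le_of_ne hle (Ne.symm hne)
  rcases le_or_gt ((k:ℝ) * π + π) (g z) with hle2 | hgt
  · have him : (k:ℝ) * π + π ∈ g '' (Icc z c) := by
      apply intermediate_value_Icc' hz.2.le (hg.mono (Icc_subset_Icc hz.1 le_rfl))
      constructor
      · rw [hgc]; linarith [Real.pi_pos]
      · exact hle2
    obtain ⟨z', hz', hgz'⟩ := him
    have hz'c : z' ≠ c := by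
      intro h
      rw [h, hgc] at hgz'
      linarith [Real.pi_pos]
    have hz'mem : z' ∈ Ico e c := ⟨hz.1.trans hz'.1, lt_of_le_of_ne hz'.2 hz'c⟩
    have := hsin z' hz'mem
    have hrw : g z' = ((k + 1 : ℤ) : ℝ) * π := by rw [hgz']; push_cast; ring
    rw [hrw, Real.sin_int_mul_pi, mul_zero] at this
    exact lt_irrefl 0 this
  · have hrw : g z = (g z - k * π) + (k:ℤ) * π := by push_cast; ring
    have hsint : 0 < sin (g z - k * π) :=
      Real.sin_pos_of_pos_of_lt_pi (by linarith) (by linarith)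
    rw [hrw, Real.sin_add_int_mul_pi, ← mul_assoc, sigma_mul_self, one_mul] at hsz
    linarith

lemma angle_const {g : ℝ → ℝ} {c x : ℝ} {k : ℤ} (hcx : c < x)
    (hg : ContinuousOn g (Icc c x)) (hgc : g c = k * π)
    (hsin : ∀ z ∈ Ioc c x, sin (g z) = 0) :
    ∀ z ∈ Ioc c x, g z = (k:ℝ) * π := by
  intro z hz
  by_contra hne
  obtain ⟨m, hm⟩ := Real.sin_eq_zero_iff.mp (hsin z hz)
  rcases lt_or_gt_of_ne hne with hlt | hgt
  · -- g z < kπ, so g z ≤ kπ - π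
    have hmk : m ≤ k - 1 := by
      have : (m:ℝ) * π < (k:ℝ) * π := by rw [hm]; exact hlt
      have h2 : m < k := by exact_mod_cast lt_of_mul_lt_mul_right this Real.pi_pos.le
      omega
    have hle2 : g z ≤ (k:ℝ) * π - π := by
      rw [← hm]
      have : (m:ℝ) ≤ (k:ℝ) - 1 := by exact_mod_cast hmk
      nlinarith [Real.pi_pos]
    have him : (k:ℝ) * π - π/2 ∈ g '' (Icc c z) := by
      apply intermediate_value_Icc' hz.1.le (hg.mono (Icc_subset_Icc le_rfl hz.2))
      constructor
      · linarith [Real.pi_pos]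
      · rw [hgc]; linarith [Real.pi_pos]
    obtain ⟨z', hz', hgz'⟩ := him
    have hz'c : z' ≠ c := by
      intro h; rw [h, hgc] at hgz'; linarith [Real.pi_pos]
    have hz'mem : z' ∈ Ioc c x :=
      ⟨lt_of_le_of_ne hz'.1 (Ne.symm hz'c), hz'.2.trans hz.2⟩
    have hs0 := hsin z' hz'mem
    have hrw : g z' = -(π/2) + (k:ℤ) * π := by rw [hgz']; ring
    rw [hrw, Real.sin_add_int_mul_pi] at hs0
    rw [Real.sin_neg, Real.sin_pi_div_two] at hs0
    rcases Int.even_or_odd k with hk | hk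
    · rw [hk.neg_one_zpow] at hs0; norm_num at hs0
    · rw [hk.neg_one_zpow] at hs0; norm_num at hs0
  · have hmk : k + 1 ≤ m := by
      have : (k:ℝ) * π < (m:ℝ) * π := by rw [hm]; exact hgt
      have h2 : k < m := by exact_mod_cast lt_of_mul_lt_mul_right this Real.pi_pos.le
      omega
    have hle2 : (k:ℝ) * π + π ≤ g z := by
      rw [← hm]
      have : (k:ℝ) + 1 ≤ (m:ℝ) := by exact_mod_cast hmk
      nlinarith [Real.pi_pos]
    have him : (k:ℝ) * π + π/2 ∈ g '' (Icc c z) := by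
      apply intermediate_value_Icc hz.1.le (hg.mono (Icc_subset_Icc le_rfl hz.2))
      constructor
      · rw [hgc]; linarith [Real.pi_pos]
      · linarith [Real.pi_pos]
    obtain ⟨z', hz', hgz'⟩ := him
    have hz'c : z' ≠ c := by
      intro h; rw [h, hgc] at hgz'; linarith [Real.pi_pos]
    have hz'mem : z' ∈ Ioc c x :=
      ⟨lt_of_le_of_ne hz'.1 (Ne.symm hz'c), hz'.2.trans hz.2⟩
    have hs0 := hsin z' hz'mem
    have hrw : g z' = π/2 + (k:ℤ) * π := by rw [hgz']; ring
    rw [hrw, Real.sin_add_int_mul_pi, Real.sin_pi_div_two] at hs0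
    rcases Int.even_or_odd k with hk | hk
    · rw [hk.neg_one_zpow] at hs0; norm_num at hs0
    · rw [hk.neg_one_zpow] at hs0; norm_num at hs0

lemma hasDerivAt_wronskian {p q0 q1 u0 u0' u1 u1' : ℝ → ℝ} {x : ℝ}
    (h0 : HasDerivAt u0 (u0' x) x) (h1 : HasDerivAt u1 (u1' x) x)
    (hp0 : HasDerivAt (fun y => p y * u0' y) (q0 x * u0 x) x)
    (hp1 : HasDerivAt (fun y => p y * u1' y) (q1 x * u1 x) x) :
    HasDerivAt (fun y => u0 y * (p y * u1' y) - u1 y * (p y * u0' y))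
      (-(q0 x - q1 x) * (u0 x * u1 x)) x := by
  have h := (h0.mul hp1).sub (h1.mul hp0)
  exact h.congr_deriv (by ring)

lemma key
    (a b : ℝ) (p q0 q1 u0 u0' u1 u1' ρ0 θ0 ρ1 θ1 : ℝ → ℝ)
    (x0 ε : ℝ) (k : ℤ) (hx0 : x0 ∈ Ioo a b) (hε : 0 < ε)
    (hsub : Ioo x0 (x0 + ε) ⊆ Ioo a b)
    (hp : ∀ x ∈ Ioo a b, 0 < p x)
    (hu0 : ∀ x ∈ Ioo a b, HasDerivAt u0 (u0' x) x)
    (hu1 : ∀ x ∈ Ioo a b, HasDerivAt u1 (u1' x) x)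
    (hpu0 : ∀ x ∈ Ioo a b, HasDerivAt (fun y => p y * u0' y) (q0 x * u0 x) x)
    (hpu1 : ∀ x ∈ Ioo a b, HasDerivAt (fun y => p y * u1' y) (q1 x * u1 x) x)
    (hθ0 : ContinuousOn θ0 (Ioo a b)) (hθ1 : ContinuousOn θ1 (Ioo a b))
    (hpr0 : ∀ x ∈ Ioo a b, 0 < ρ0 x ∧ u0 x = ρ0 x * sin (θ0 x) ∧
      p x * u0' x = ρ0 x * cos (θ0 x))
    (hpr1 : ∀ x ∈ Ioo a b, 0 < ρ1 x ∧ u1 x = ρ1 x * sin (θ1 x) ∧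
      p x * u1' x = ρ1 x * cos (θ1 x))
    (hk : θ1 x0 - θ0 x0 = k * π)
    (hq : ∀ᵐ x ∂(volume.restrict (Ioo x0 (x0 + ε))), 0 < q0 x - q1 x) :
    ∀ x ∈ Ioo x0 (x0 + ε), (k:ℝ) * π < θ1 x - θ0 x := by
  set W : ℝ → ℝ := fun y => u0 y * (p y * u1' y) - u1 y * (p y * u0' y) with hWdef
  have hW : ∀ x ∈ Ioo a b, HasDerivAt W (-(q0 x - q1 x) * (u0 x * u1 x)) x := fun x hx =>
    hasDerivAt_wronskian (hu0 x hx) (hu1 x hx) (hpu0 x hx) (hpu1 x hx)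
  have hWsin : ∀ x ∈ Ioo a b, W x = -(ρ0 x * ρ1 x) * sin (θ1 x - θ0 x) := by
    intro x hx
    obtain ⟨h1, h2, h3⟩ := hpr0 x hx
    obtain ⟨h4, h5, h6⟩ := hpr1 x hx
    simp only [hWdef]
    rw [h2, h3, h5, h6, Real.sin_sub]
    ring
  have hΔcont : ContinuousOn (fun z => θ1 z - θ0 z) (Ioo a b) := hθ1.sub hθ0
  -- local sign of u0 * u1 near a point where the angle difference is k π
  have hsign : ∀ c ∈ Ioo a b, θ1 c - θ0 c = k * π →
      ∃ δ > 0, ∀ x ∈ Ioo a b, x ≠ c → |x - c| < δ →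
        0 < (-1:ℝ)^k * (u0 x * u1 x) := by
    intro c hc hck
    obtain ⟨hρ0, he0, hf0⟩ := hpr0 c hc
    obtain ⟨hρ1, he1, hf1⟩ := hpr1 c hc
    have hθ1c : θ1 c = θ0 c + (k:ℝ) * π := by linarith
    have hsin1 : sin (θ1 c) = (-1:ℝ)^k * sin (θ0 c) := by
      rw [hθ1c]; exact_mod_cast Real.sin_add_int_mul_pi (θ0 c) k
    have hcos1 : cos (θ1 c) = (-1:ℝ)^k * cos (θ0 c) := by
      rw [hθ1c]; exact_mod_cast Real.cos_add_int_mul_pi (θ0 c) k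
    by_cases hu0c : u0 c = 0
    · -- simultaneous zero of u0 and u1
      have hsin0 : sin (θ0 c) = 0 := by
        rw [he0] at hu0c
        rcases mul_eq_zero.mp hu0c with h | h
        · exact absurd h (ne_of_gt hρ0)
        · exact h
      have hu1c : u1 c = 0 := by rw [he1, hsin1, hsin0]; ring
      have hcos0 : cos (θ0 c) * cos (θ0 c) = 1 := by
        have := Real.sin_sq_add_cos_sq (θ0 c)
        nlinarith [hsin0]
      have hpc := hp c hc
      have hpos : 0 < (-1:ℝ)^k * (u0' c * u1' c) := by
        have hkey : ((-1:ℝ)^k * (u0' c * u1' c)) * (p c * p c) =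
            ((-1:ℝ)^k * ((-1:ℝ)^k)) * (ρ0 c * ρ1 c * (cos (θ0 c) * cos (θ0 c))) := by
          have e1 : (p c * u0' c) * (p c * u1' c) =
              (ρ0 c * cos (θ0 c)) * (ρ1 c * ((-1:ℝ)^k * cos (θ0 c))) := by
            rw [hf0, hf1, hcos1]
          linear_combination ((-1:ℝ)^k) * e1
        rw [sigma_mul_self, hcos0, one_mul, mul_one] at hkey
        have hp2 : 0 < p c * p c := mul_pos hpc hpc
        have hr : 0 < ρ0 c * ρ1 c := mul_pos hρ0 hρ1
        nlinarith [hkey, hp2, hr]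
      have hs0 : Filter.Tendsto (slope u0 c) (nhdsWithin c {c}ᶜ) (nhds (u0' c)) :=
        hasDerivAt_iff_tendsto_slope.mp (hu0 c hc)
      have hs1 : Filter.Tendsto (slope u1 c) (nhdsWithin c {c}ᶜ) (nhds (u1' c)) :=
        hasDerivAt_iff_tendsto_slope.mp (hu1 c hc)
      have hprod : Filter.Tendsto (fun x => (-1:ℝ)^k * (slope u0 c x * slope u1 c x))
          (nhdsWithin c {c}ᶜ) (nhds ((-1:ℝ)^k * (u0' c * u1' c))) :=
        Filter.Tendsto.const_mul _ (hs0.mul hs1)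
      have hev : ∀ᶠ x in nhdsWithin c {c}ᶜ,
          0 < (-1:ℝ)^k * (slope u0 c x * slope u1 c x) :=
        hprod.eventually (eventually_gt_nhds hpos)
      rw [eventually_nhdsWithin_iff, Metric.eventually_nhds_iff] at hev
      obtain ⟨δ, hδ, hball⟩ := hev
      refine ⟨δ, hδ, ?_⟩
      intro x hxab hxc hdist
      have hx' := hball (show dist x c < δ by rwa [Real.dist_eq]) (by simpa using hxc)
      rw [slope_def_field, slope_def_field, hu0c, hu1c, sub_zero, sub_zero] at hx'
      have hd : x - c ≠ 0 := sub_ne_zero.mpr hxc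
      have hrw : (-1:ℝ)^k * (u0 x / (x - c) * (u1 x / (x - c))) =
          ((-1:ℝ)^k * (u0 x * u1 x)) / ((x - c) * (x - c)) := by
        field_simp
      rw [hrw] at hx'
      have hd2 : 0 < (x - c) * (x - c) := mul_self_pos.mpr hd
      rcases div_pos_iff.mp hx' with ⟨h, _⟩ | ⟨_, h⟩
      · exact h
      · linarith
    · -- u0 c ≠ 0
      have hsin0 : sin (θ0 c) ≠ 0 := by
        intro h; apply hu0c; rw [he0, h]; ring
      have hpos : 0 < (-1:ℝ)^k * (u0 c * u1 c) := by
        have : (-1:ℝ)^k * (u0 c * u1 c) =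
            ((-1:ℝ)^k * ((-1:ℝ)^k)) * (ρ0 c * ρ1 c * (sin (θ0 c) * sin (θ0 c))) := by
          rw [he0, he1, hsin1]; ring
        rw [this, sigma_mul_self, one_mul]
        have h2 : 0 < sin (θ0 c) * sin (θ0 c) := mul_self_pos.mpr hsin0
        positivity
      have hcont : ContinuousAt (fun x => (-1:ℝ)^k * (u0 x * u1 x)) c :=
        (continuousAt_const.mul ((hu0 c hc).continuousAt.mul (hu1 c hc).continuousAt))
      have hev := hcont.eventually (eventually_gt_nhds hpos)
      rw [Metric.eventually_nhds_iff] at hev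
      obtain ⟨δ, hδ, hball⟩ := hev
      exact ⟨δ, hδ, fun x hxab hxc hdist =>
        hball (show dist x c < δ by rwa [Real.dist_eq])⟩
  -- local lemma to the right
  have localR : ∀ c ∈ Ioo a b, x0 ≤ c → ∀ d, c < d → d ≤ x0 + ε → θ1 c - θ0 c = k * π →
      ∃ e ∈ Ioo c d, ∀ z ∈ Ioc c e, (k:ℝ) * π < θ1 z - θ0 z := by
    intro c hc hx0c d hcd hdle hck
    obtain ⟨δ, hδ, hsgn⟩ := hsign c hc hck
    set e := min (c + δ/2) ((c + d)/2) with hedef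
    have hce : c < e := lt_min (by linarith) (by linarith)
    have hed : e < d := lt_of_le_of_lt (min_le_right _ _) (by linarith)
    have heδ : e ≤ c + δ/2 := min_le_left _ _
    have hIccsub : Icc c e ⊆ Ioo a b := by
      intro z hz
      rcases eq_or_lt_of_le hz.1 with h | h
      · rwa [← h]
      · exact hsub ⟨lt_of_le_of_lt hx0c h, lt_of_le_of_lt hz.2 (lt_of_lt_of_le hed hdle)⟩
    have hWd : ∀ z ∈ Icc c e, HasDerivAt (fun x => (-1:ℝ)^k * W x)
        ((-1:ℝ)^k * (-(q0 z - q1 z) * (u0 z * u1 z))) z :=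
      fun z hz => (hW z (hIccsub hz)).const_mul _
    have hae : ∀ᵐ z ∂(volume.restrict (Ioo c e)),
        (-1:ℝ)^k * (-(q0 z - q1 z) * (u0 z * u1 z)) < 0 := by
      have hsub2 : Ioo c e ⊆ Ioo x0 (x0 + ε) := fun z hz =>
        ⟨lt_of_le_of_lt hx0c hz.1, lt_of_lt_of_le (hz.2.trans hed) hdle⟩
      have hq' := ae_restrict_of_ae_restrict_of_subset hsub2 hq
      filter_upwards [hq', ae_restrict_mem measurableSet_Ioo] with z hz1 hz2
      have hzab : z ∈ Ioo a b := hIccsub (Ioo_subset_Icc_self hz2)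
      have hzpos := hsgn z hzab (ne_of_gt hz2.1)
        (by rw [abs_of_pos (by linarith [hz2.1] : (0:ℝ) < z - c)]; linarith [hz2.2])
      have hrw : (-1:ℝ)^k * (-(q0 z - q1 z) * (u0 z * u1 z)) =
          -((q0 z - q1 z) * ((-1:ℝ)^k * (u0 z * u1 z))) := by ring
      rw [hrw]
      have := mul_pos hz1 hzpos
      linarith
    have hanti := strictAntiOn_of_hasDerivAt_ae_neg hWd hae
    have hWc : W c = 0 := by
      rw [hWsin c hc, hck]
      rw [show ((k:ℝ) * π) = ((k:ℤ):ℝ) * π by norm_num, Real.sin_int_mul_pi]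
      ring
    refine ⟨e, ⟨hce, hed⟩, ?_⟩
    have hsinpos : ∀ z ∈ Ioc c e, 0 < (-1:ℝ)^k * sin (θ1 z - θ0 z) := by
      intro z hz
      have h1 : (-1:ℝ)^k * W z < (-1:ℝ)^k * W c :=
        hanti ⟨le_rfl, hce.le⟩ ⟨hz.1.le, hz.2⟩ hz.1
      rw [hWc, mul_zero] at h1
      have hzab := hIccsub ⟨hz.1.le, hz.2⟩
      rw [hWsin z hzab] at h1
      obtain ⟨hρ0z, _, _⟩ := hpr0 z hzab
      obtain ⟨hρ1z, _, _⟩ := hpr1 z hzab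
      have h2 : 0 < ρ0 z * ρ1 z * ((-1:ℝ)^k * sin (θ1 z - θ0 z)) := by nlinarith [h1]
      nlinarith [h2, mul_pos hρ0z hρ1z]
    exact angle_right hce (hΔcont.mono hIccsub) hck hsinpos
  -- local lemma to the left
  have localL : ∀ c ∈ Ioo a b, c ≤ x0 + ε → ∀ d, x0 ≤ d → d < c → θ1 c - θ0 c = k * π →
      ∃ e ∈ Ioo d c, ∀ z ∈ Ico e c, θ1 z - θ0 z < (k:ℝ) * π := by
    intro c hc hcle d hx0d hdc hck
    obtain ⟨δ, hδ, hsgn⟩ := hsign c hc hck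
    set e := max (c - δ/2) ((d + c)/2) with hedef
    have hce : e < c := max_lt (by linarith) (by linarith)
    have hed : d < e := lt_of_lt_of_le (by linarith) (le_max_right _ _)
    have heδ : c - δ/2 ≤ e := le_max_left _ _
    have hIccsub : Icc e c ⊆ Ioo a b := by
      intro z hz
      rcases eq_or_lt_of_le hz.2 with h | h
      · rwa [h]
      · exact hsub ⟨lt_of_le_of_lt hx0d (lt_of_lt_of_le hed hz.1),
          lt_of_lt_of_le h hcle⟩
    have hWd : ∀ z ∈ Icc e c, HasDerivAt (fun x => (-1:ℝ)^k * W x)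
        ((-1:ℝ)^k * (-(q0 z - q1 z) * (u0 z * u1 z))) z :=
      fun z hz => (hW z (hIccsub hz)).const_mul _
    have hae : ∀ᵐ z ∂(volume.restrict (Ioo e c)),
        (-1:ℝ)^k * (-(q0 z - q1 z) * (u0 z * u1 z)) < 0 := by
      have hsub2 : Ioo e c ⊆ Ioo x0 (x0 + ε) := fun z hz =>
        ⟨lt_of_le_of_lt hx0d (hed.trans hz.1), lt_of_lt_of_le hz.2 hcle⟩
      have hq' := ae_restrict_of_ae_restrict_of_subset hsub2 hq
      filter_upwards [hq', ae_restrict_mem measurableSet_Ioo] with z hz1 hz2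
      have hzab : z ∈ Ioo a b := hIccsub (Ioo_subset_Icc_self hz2)
      have hzpos := hsgn z hzab (ne_of_lt hz2.2)
        (by rw [abs_of_neg (by linarith [hz2.2] : z - c < 0)]; linarith [hz2.1])
      have hrw : (-1:ℝ)^k * (-(q0 z - q1 z) * (u0 z * u1 z)) =
          -((q0 z - q1 z) * ((-1:ℝ)^k * (u0 z * u1 z))) := by ring
      rw [hrw]
      have := mul_pos hz1 hzpos
      linarith
    have hanti := strictAntiOn_of_hasDerivAt_ae_neg hWd hae
    have hWc : W c = 0 := by
      rw [hWsin c hc, hck]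
      rw [show ((k:ℝ) * π) = ((k:ℤ):ℝ) * π by norm_num, Real.sin_int_mul_pi]
      ring
    refine ⟨e, ⟨hed, hce⟩, ?_⟩
    have hsinneg : ∀ z ∈ Ico e c, (-1:ℝ)^k * sin (θ1 z - θ0 z) < 0 := by
      intro z hz
      have h1 : (-1:ℝ)^k * W c < (-1:ℝ)^k * W z :=
        hanti ⟨hz.1, hz.2.le⟩ ⟨hce.le, le_rfl⟩ hz.2
      rw [hWc, mul_zero] at h1
      have hzab := hIccsub ⟨hz.1, hz.2.le⟩
      rw [hWsin z hzab] at h1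
      obtain ⟨hρ0z, _, _⟩ := hpr0 z hzab
      obtain ⟨hρ1z, _, _⟩ := hpr1 z hzab
      have h2 : ρ0 z * ρ1 z * ((-1:ℝ)^k * sin (θ1 z - θ0 z)) < 0 := by nlinarith [h1]
      nlinarith [h2, mul_pos hρ0z hρ1z]
    exact angle_left hce (hΔcont.mono hIccsub) hck hsinneg
  -- global assembly
  intro x hx
  have step1 : ∀ y ∈ Ioo x0 (x0 + ε), (k:ℝ) * π ≤ θ1 y - θ0 y := by
    intro y hy
    by_contra hlt
    push_neg at hlt
    have hIccy : Icc x0 y ⊆ Ioo a b := by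
      intro z hz
      rcases eq_or_lt_of_le hz.1 with h | h
      · rwa [← h]
      · exact hsub ⟨h, lt_of_le_of_lt hz.2 hy.2⟩
    set S := Icc x0 y ∩ (fun z => θ1 z - θ0 z) ⁻¹' (Ici ((k:ℝ) * π)) with hSdef
    have hSc : IsClosed S :=
      (hΔcont.mono hIccy).preimage_isClosed_of_isClosed isClosed_Icc isClosed_Ici
    have hSne : S.Nonempty := ⟨x0, ⟨le_rfl, hy.1.le⟩, by simp [hk]⟩
    have hSbdd : BddAbove S := BddAbove.mono inter_subset_left bddAbove_Icc
    set c := sSup S with hcdef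
    have hcS : c ∈ S := hSc.csSup_mem hSne hSbdd
    have hcy : c < y := by
      rcases hcS.1.2.eq_or_lt with h | h
      · exfalso
        have := hcS.2
        rw [h] at this
        exact absurd this (not_le.mpr hlt)
      · exact h
    have hcab : c ∈ Ioo a b := hIccy hcS.1
    have hlt2 : ∀ z ∈ Ioc c y, θ1 z - θ0 z < (k:ℝ) * π := by
      intro z hz
      by_contra hge
      push_neg at hge
      have hzS : z ∈ S := ⟨⟨hcS.1.1.trans hz.1.le, hz.2⟩, hge⟩
      exact absurd (le_csSup hSbdd hzS) (not_le.mpr hz.1)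
    have hck : θ1 c - θ0 c = k * π := by
      refine le_antisymm ?_ hcS.2
      have hca : ContinuousAt (fun z => θ1 z - θ0 z) c :=
        hΔcont.continuousAt (isOpen_Ioo.mem_nhds hcab)
      have htd : Filter.Tendsto (fun z => θ1 z - θ0 z) (nhdsWithin c (Ioi c))
          (nhds (θ1 c - θ0 c)) := hca.tendsto.mono_left nhdsWithin_le_nhds
      refine le_of_tendsto htd ?_
      filter_upwards [Ioc_mem_nhdsGT_of_mem ⟨le_rfl, hcy⟩] with z hz
      exact (hlt2 z hz).le
    obtain ⟨e, he, hgt⟩ := localR c hcab hcS.1.1 y hcy hy.2.le hck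
    have h1 := hgt e ⟨he.1, le_rfl⟩
    have h2 := hlt2 e ⟨he.1, he.2.le⟩
    linarith
  have step2 : θ1 x - θ0 x ≠ (k:ℝ) * π := by
    intro hxk
    obtain ⟨e, he, hlt⟩ := localL x (hsub hx) hx.2.le x0 le_rfl hx.1 hxk
    have h1 := hlt e ⟨le_rfl, he.2⟩
    have h2 := step1 e ⟨he.1, he.2.trans hx.2⟩
    linarith
  exact lt_of_le_of_ne (step1 x hx) (Ne.symm step2)


/-- Sign of the Prüfer angle difference near a zero of the Wronskian: if
`Δ = θ₁ - θ₀` is a multiple of `π` at `x₀` and `q₀ - q₁` has a definite sign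
a.e. on `(x₀, x₀ + ε)`, then `Δ - Δ(x₀)` has the same sign there. -/
theorem pruefer_angle_difference_sign
    (a b : ℝ) (p q0 q1 u0 u0' u1 u1' ρ0 θ0 ρ1 θ1 : ℝ → ℝ)
    (x0 ε : ℝ) (hx0 : x0 ∈ Ioo a b) (hε : 0 < ε) (hsub : Ioo x0 (x0 + ε) ⊆ Ioo a b)
    (hp : ∀ x ∈ Ioo a b, 0 < p x)
    (hu0 : ∀ x ∈ Ioo a b, HasDerivAt u0 (u0' x) x)
    (hu1 : ∀ x ∈ Ioo a b, HasDerivAt u1 (u1' x) x)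
    (hpu0 : ∀ x ∈ Ioo a b, HasDerivAt (fun y => p y * u0' y) (q0 x * u0 x) x)
    (hpu1 : ∀ x ∈ Ioo a b, HasDerivAt (fun y => p y * u1' y) (q1 x * u1 x) x)
    (hθ0 : ContinuousOn θ0 (Ioo a b)) (hθ1 : ContinuousOn θ1 (Ioo a b))
    (hpr0 : ∀ x ∈ Ioo a b, 0 < ρ0 x ∧ u0 x = ρ0 x * sin (θ0 x) ∧
      p x * u0' x = ρ0 x * cos (θ0 x))
    (hpr1 : ∀ x ∈ Ioo a b, 0 < ρ1 x ∧ u1 x = ρ1 x * sin (θ1 x) ∧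
      p x * u1' x = ρ1 x * cos (θ1 x))
    (hΔ : ∃ k : ℤ, θ1 x0 - θ0 x0 = k * π) :
    ((∀ᵐ x ∂(volume.restrict (Ioo x0 (x0 + ε))), 0 < q0 x - q1 x) →
      ∀ x ∈ Ioo x0 (x0 + ε), θ1 x0 - θ0 x0 < θ1 x - θ0 x) ∧
    ((∀ᵐ x ∂(volume.restrict (Ioo x0 (x0 + ε))), q0 x - q1 x < 0) →
      ∀ x ∈ Ioo x0 (x0 + ε), θ1 x - θ0 x < θ1 x0 - θ0 x0) ∧
    ((∀ᵐ x ∂(volume.restrict (Ioo x0 (x0 + ε))), q0 x = q1 x) →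
      ∀ x ∈ Ioo x0 (x0 + ε), θ1 x - θ0 x = θ1 x0 - θ0 x0) := by
  obtain ⟨k, hk⟩ := hΔ
  refine ⟨?_, ?_, ?_⟩
  · intro hq x hx
    rw [hk]
    exact key a b p q0 q1 u0 u0' u1 u1' ρ0 θ0 ρ1 θ1 x0 ε k hx0 hε hsub hp hu0 hu1 hpu0 hpu1
      hθ0 hθ1 hpr0 hpr1 hk hq x hx
  · intro hq x hx
    have hk' : θ0 x0 - θ1 x0 = ((-k : ℤ) : ℝ) * π := by push_cast; linarith
    have h := key a b p q1 q0 u1 u1' u0 u0' ρ1 θ1 ρ0 θ0 x0 ε (-k) hx0 hε hsub hp hu1 hu0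
      hpu1 hpu0 hθ1 hθ0 hpr1 hpr0 hk' (hq.mono fun z hz => by linarith) x hx
    push_cast at h
    rw [hk]
    linarith
  · intro hq x hx
    set W : ℝ → ℝ := fun y => u0 y * (p y * u1' y) - u1 y * (p y * u0' y) with hWdef
    have hIccx : Icc x0 x ⊆ Ioo a b := by
      intro z hz
      rcases eq_or_lt_of_le hz.1 with h | h
      · rwa [← h]
      · exact hsub ⟨h, lt_of_le_of_lt hz.2 hx.2⟩
    have hWd : ∀ z ∈ Icc x0 x, HasDerivAt W (-(q0 z - q1 z) * (u0 z * u1 z)) z := fun z hz =>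
      hasDerivAt_wronskian (hu0 z (hIccx hz)) (hu1 z (hIccx hz)) (hpu0 z (hIccx hz))
        (hpu1 z (hIccx hz))
    have hae : ∀ᵐ z ∂(volume.restrict (Ioo x0 x)), -(q0 z - q1 z) * (u0 z * u1 z) = 0 := by
      have hsub2 : Ioo x0 x ⊆ Ioo x0 (x0 + ε) := fun z hz => ⟨hz.1, hz.2.trans hx.2⟩
      filter_upwards [ae_restrict_of_ae_restrict_of_subset hsub2 hq] with z hz
      rw [hz]; ring
    have hconst := constant_of_hasDerivAt_ae_zero hWd hae
    have hWsin : ∀ z ∈ Ioo a b, W z = -(ρ0 z * ρ1 z) * sin (θ1 z - θ0 z) := by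
      intro z hz
      obtain ⟨h1, h2, h3⟩ := hpr0 z hz
      obtain ⟨h4, h5, h6⟩ := hpr1 z hz
      simp only [hWdef]
      rw [h2, h3, h5, h6, Real.sin_sub]
      ring
    have hWx0 : W x0 = 0 := by
      rw [hWsin x0 hx0, hk,
        show ((k:ℝ) * π) = ((k:ℤ):ℝ) * π by norm_num, Real.sin_int_mul_pi]
      ring
    have hsin0 : ∀ z ∈ Ioc x0 x, sin (θ1 z - θ0 z) = 0 := by
      intro z hz
      have hzab := hIccx ⟨hz.1.le, hz.2⟩
      have h0 : W z = 0 := by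
        rw [hconst z ⟨hz.1.le, hz.2⟩ x0 ⟨le_rfl, hx.1.le⟩]
        exact hWx0
      rw [hWsin z hzab] at h0
      obtain ⟨hρ0z, _, _⟩ := hpr0 z hzab
      obtain ⟨hρ1z, _, _⟩ := hpr1 z hzab
      rcases mul_eq_zero.mp h0 with h | h
      · exfalso; nlinarith [mul_pos hρ0z hρ1z]
      · exact h
    have hΔcont : ContinuousOn (fun z => θ1 z - θ0 z) (Ioo a b) := hθ1.sub hθ0
    rw [hk]
    exact angle_const hx.1 (hΔcont.mono hIccx) hk hsin0 x ⟨hx.1, le_rfl⟩
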